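/- arXiv:1908.07104 — 3 statements merged into one kernel-verified Lean document; each statement's English description precedes it below -/
import Mathlib

section
/- The ternary Golay code 𝒢 has minimum distance 5: every nonzero codeword of 𝒢 has Hamming weight at least 5, and there exists a codeword of 𝒢 of Hamming weight exactly 5. -/
set_option maxRecDepth 10000
set_option maxHeartbeats 4000000


/-- The generating vector `(−1,+1,−1,+1,+1,+1,−1,−1,−1,+1,−1)` over `𝔽₃`. -/
def gVec : Fin 11 → ZMod 3 := ![-1, 1, -1, 1, 1, 1, -1, -1, -1, 1, -1]

/-- The `k`-th cyclic shift of `gVec`. -/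
def gShift (k : Fin 11) : Fin 11 → ZMod 3 := fun i => gVec (i - k)

/-- The ternary Golay code: the `𝔽₃`-linear span of the 11 cyclic shifts of `gVec`. -/
def Golay : Submodule (ZMod 3) (Fin 11 → ZMod 3) :=
  Submodule.span (ZMod 3) (Set.range gShift)

/-- First six shifts, a basis of the code. -/
def gB : Fin 6 → Fin 11 → ZMod 3 := fun i => gShift ⟨i.val, by omega⟩

/-- Coefficient matrix expressing each shift in the basis. -/
def gM : Fin 11 → Fin 6 → ZMod 3 :=
  ![![1,0,0,0,0,0], ![0,1,0,0,0,0], ![0,0,1,0,0,0], ![0,0,0,1,0,0],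
    ![0,0,0,0,1,0], ![0,0,0,0,0,1], ![2,1,1,1,2,0], ![0,2,1,1,1,2],
    ![1,2,1,0,2,1], ![2,2,0,2,2,2], ![1,1,1,2,0,2]]

lemma gShift_eq (k : Fin 11) : gShift k = ∑ i : Fin 6, gM k i • gB i := by
  revert k; decide

lemma golay_eq : Golay = Submodule.span (ZMod 3) (Set.range gB) := by
  apply le_antisymm
  · rw [Golay, Submodule.span_le]
    rintro _ ⟨k, rfl⟩
    exact (Submodule.mem_span_range_iff_exists_fun _).mpr ⟨gM k, (gShift_eq k).symm⟩
  · rw [Submodule.span_le]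
    rintro _ ⟨i, rfl⟩
    exact Submodule.subset_span ⟨⟨i.val, by omega⟩, rfl⟩

lemma key : ∀ a : Fin 6 → ZMod 3,
    (∑ i : Fin 6, a i • gB i) ≠ 0 → 5 ≤ hammingNorm (∑ i : Fin 6, a i • gB i) := by
  decide

theorem stmt1 :
    (∀ c ∈ Golay, c ≠ 0 → 5 ≤ hammingNorm c) ∧
    (∃ c ∈ Golay, hammingNorm c = 5) := by
  constructor
  · intro c hc hne
    rw [golay_eq] at hc
    obtain ⟨a, rfl⟩ := (Submodule.mem_span_range_iff_exists_fun _).mp hc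
    exact key a hne
  · refine ⟨gShift 4 + gShift 5, ?_, ?_⟩
    · exact Submodule.add_mem _ (Submodule.subset_span ⟨4, rfl⟩)
        (Submodule.subset_span ⟨5, rfl⟩)
    · decide
end

section
/- The shortened ternary Golay code 𝒢′ = {(c₁,…,c₁₀) ∈ 𝔽₃¹⁰ : (0,c₁,…,c₁₀) ∈ 𝒢} is a 5-dimensional 𝔽₃-subspace of 𝔽₃¹⁰, and every nonzero codeword of 𝒢′ has Hamming weight at least 5. -/
set_option maxRecDepth 100000

def Shortened : Submodule (ZMod 3) (Fin 10 → ZMod 3) where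
  carrier := {c | (Fin.cons 0 c : Fin 11 → ZMod 3) ∈ Golay}
  zero_mem' := by
    have h : (Fin.cons 0 (0 : Fin 10 → ZMod 3) : Fin 11 → ZMod 3) = 0 := by
      funext i; refine Fin.cases ?_ ?_ i <;> simp
    simp only [Set.mem_setOf_eq, h]
    exact Golay.zero_mem
  add_mem' := by
    intro a b ha hb
    have h : (Fin.cons 0 (a + b) : Fin 11 → ZMod 3) =
        (Fin.cons 0 a : Fin 11 → ZMod 3) + (Fin.cons 0 b : Fin 11 → ZMod 3) := by
      funext i; refine Fin.cases ?_ ?_ i <;> simp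
    simp only [Set.mem_setOf_eq, h]
    exact Golay.add_mem ha hb
  smul_mem' := by
    intro t a ha
    have h : (Fin.cons 0 (t • a) : Fin 11 → ZMod 3) =
        t • (Fin.cons 0 a : Fin 11 → ZMod 3) := by
      funext i; refine Fin.cases ?_ ?_ i <;> simp
    simp only [Set.mem_setOf_eq, h]
    exact Golay.smul_mem t ha

/-- Systematic generator rows for the Golay code. -/
def rRow : Fin 6 → Fin 11 → ZMod 3 :=
  ![![1,0,0,0,0,0,2,2,1,2,0],
    ![0,1,0,0,0,0,0,2,2,1,2],
    ![0,0,1,0,0,0,2,2,0,1,1],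
    ![0,0,0,1,0,0,1,0,1,1,1],
    ![0,0,0,0,1,0,1,2,2,2,1],
    ![0,0,0,0,0,1,1,2,1,0,2]]

/-- Coefficients expressing each `rRow` in terms of the shifts. -/
def coeffM : Fin 6 → Fin 11 → ZMod 3 :=
  ![![2,0,1,0,2,2,0,0,0,0,0],
    ![1,1,2,0,1,2,0,0,0,0,0],
    ![0,0,1,1,0,0,0,0,0,0,0],
    ![1,0,2,1,2,1,0,0,0,0,0],
    ![0,2,0,0,1,0,0,0,0,0,0],
    ![1,0,1,0,1,2,0,0,0,0,0]]

/-- Generator rows of the shortened code. -/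
def sRow : Fin 5 → Fin 10 → ZMod 3 := fun i j => rRow i.succ j.succ

lemma rRow_eq_comb : ∀ i : Fin 6, ∑ k : Fin 11, coeffM i k • gShift k = rRow i := by decide

lemma gShift_eq_comb :
    ∀ k : Fin 11, ∑ i : Fin 6, gShift k (Fin.castLE (by omega) i) • rRow i = gShift k := by
  decide

lemma Golay_eq : Golay = Submodule.span (ZMod 3) (Set.range rRow) := by
  apply le_antisymm
  · rw [Golay, Submodule.span_le]
    rintro _ ⟨k, rfl⟩
    rw [SetLike.mem_coe, Submodule.mem_span_range_iff_exists_fun]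
    exact ⟨_, gShift_eq_comb k⟩
  · rw [Submodule.span_le]
    rintro _ ⟨i, rfl⟩
    rw [SetLike.mem_coe, Golay, Submodule.mem_span_range_iff_exists_fun]
    exact ⟨_, rRow_eq_comb i⟩

lemma sum_rRow_apply_zero : ∀ x : Fin 6 → ZMod 3, (∑ i, x i • rRow i) 0 = x 0 := by decide

lemma cons_sRow : ∀ i : Fin 5, (Fin.cons 0 (sRow i) : Fin 11 → ZMod 3) = rRow i.succ := by
  decide

lemma Shortened_eq : Shortened = Submodule.span (ZMod 3) (Set.range sRow) := by
  apply le_antisymm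
  · intro c hc
    have hc' : (Fin.cons 0 c : Fin 11 → ZMod 3) ∈ Golay := hc
    rw [Golay_eq, Submodule.mem_span_range_iff_exists_fun] at hc'
    obtain ⟨x, hx⟩ := hc'
    have hx0 : x 0 = 0 := by
      have := congrFun hx 0
      rwa [sum_rRow_apply_zero, Fin.cons_zero] at this
    rw [Submodule.mem_span_range_iff_exists_fun]
    refine ⟨fun i => x i.succ, ?_⟩
    funext j
    have := congrFun hx j.succ
    rw [Fin.cons_succ] at this
    rw [← this]
    rw [Finset.sum_apply, Finset.sum_apply, Fin.sum_univ_succ (f := fun i => (x i • rRow i) j.succ)]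
    simp [hx0, sRow]
  · rw [Submodule.span_le]
    rintro _ ⟨i, rfl⟩
    show (Fin.cons 0 (sRow i) : Fin 11 → ZMod 3) ∈ Golay
    rw [cons_sRow, Golay_eq]
    exact Submodule.subset_span ⟨i.succ, rfl⟩

lemma sRow_indep_aux : ∀ x : Fin 5 → ZMod 3, ∑ i, x i • sRow i = 0 → ∀ i, x i = 0 := by decide

lemma minwt_aux : ∀ x : Fin 5 → ZMod 3, (∑ i, x i • sRow i) ≠ 0 →
    5 ≤ hammingNorm (∑ i, x i • sRow i) := by decide

theorem stmt11 :
    Module.finrank (ZMod 3) Shortened = 5 ∧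
    ∀ c ∈ Shortened, c ≠ 0 → 5 ≤ hammingNorm c := by
  have hspan := Shortened_eq
  constructor
  · rw [hspan]
    have hli : LinearIndependent (ZMod 3) sRow :=
      Fintype.linearIndependent_iff.mpr sRow_indep_aux
    simpa using finrank_span_eq_card hli
  · intro c hc hne
    rw [hspan, Submodule.mem_span_range_iff_exists_fun] at hc
    obtain ⟨x, hx⟩ := hc
    rw [← hx]
    exact minwt_aux x (hx ▸ hne)
end

section
/- Let Λ′ be the simple graph on the 243 cosets of the ternary Golay code 𝒢 in 𝔽₃¹¹, where two distinct cosets 𝒢 + x and 𝒢 + y are adjacent if and only if the coset 𝒢 + (y − x) contains a vector of Hamming weight 1 whose unique nonzero coordinate is not coordinate 0. Then Λ′ is isomorphic to the coset graph of the shortened ternary Golay code 𝒢′ ⊆ 𝔽₃¹⁰. -/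
/-- The coset graph of a linear code `C ⊆ 𝔽₃ⁿ`: vertices are the cosets of `C`, with two
distinct cosets adjacent iff they contain representatives at Hamming distance 1. -/
def CosetGraph {n : ℕ} (C : Submodule (ZMod 3) (Fin n → ZMod 3)) :
    SimpleGraph ((Fin n → ZMod 3) ⧸ C) :=
  SimpleGraph.fromRel fun X Y =>
    ∃ x y : Fin n → ZMod 3,
      (Submodule.Quotient.mk x : (Fin n → ZMod 3) ⧸ C) = X ∧
      (Submodule.Quotient.mk y : (Fin n → ZMod 3) ⧸ C) = Y ∧
      hammingDist x y = 1

/-- The graph `Λ′` on the cosets of the ternary Golay code `𝒢`, where distinct cosets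
`𝒢 + x` and `𝒢 + y` are adjacent iff `𝒢 + (y - x)` contains a vector of Hamming weight 1
whose unique nonzero coordinate is not coordinate `0`. -/
def LambdaPrime : SimpleGraph ((Fin 11 → ZMod 3) ⧸ Golay) :=
  SimpleGraph.fromRel fun C D =>
    ∃ v : Fin 11 → ZMod 3, hammingNorm v = 1 ∧ v 0 = 0 ∧
      (Submodule.Quotient.mk v : (Fin 11 → ZMod 3) ⧸ Golay) = D - C

/-- Prepending a zero coordinate, as a linear map. -/
def consL : (Fin 10 → ZMod 3) →ₗ[ZMod 3] (Fin 11 → ZMod 3) where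
  toFun v := Fin.cons 0 v
  map_add' a b := by funext i; refine Fin.cases ?_ ?_ i <;> simp
  map_smul' t a := by funext i; refine Fin.cases ?_ ?_ i <;> simp

lemma shortened_le : Shortened ≤ Golay.comap consL := fun c hc => hc

/-- The induced map on quotients. -/
def phi : ((Fin 10 → ZMod 3) ⧸ Shortened) →ₗ[ZMod 3] ((Fin 11 → ZMod 3) ⧸ Golay) :=
  Submodule.mapQ Shortened Golay consL shortened_le

lemma phi_mk (w : Fin 10 → ZMod 3) :
    phi (Submodule.Quotient.mk w) = Submodule.Quotient.mk (Fin.cons 0 w) :=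
  rfl

lemma phi_inj : Function.Injective phi := by
  rw [← LinearMap.ker_eq_bot]
  apply Submodule.ker_liftQ_eq_bot
  intro c hc
  simp only [LinearMap.mem_ker, LinearMap.comp_apply, Submodule.mkQ_apply,
    Submodule.Quotient.mk_eq_zero] at hc
  exact hc

lemma phi_surj : Function.Surjective phi := by
  intro V
  obtain ⟨v, rfl⟩ := Submodule.Quotient.mk_surjective _ V
  set w : Fin 11 → ZMod 3 := v + (v 0) • gShift 0 with hw
  have hw0 : w 0 = 0 := by
    have hg : gShift 0 0 = -1 := by simp [gShift, gVec]
    simp only [hw, Pi.add_apply, Pi.smul_apply, smul_eq_mul, hg]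
    ring
  have hmem : gShift 0 ∈ Golay := Submodule.subset_span ⟨0, rfl⟩
  have hq : (Submodule.Quotient.mk w : (Fin 11 → ZMod 3) ⧸ Golay) = Submodule.Quotient.mk v := by
    rw [Submodule.Quotient.eq]
    simpa [hw] using Golay.smul_mem (v 0) hmem
  refine ⟨Submodule.Quotient.mk (Fin.tail w), ?_⟩
  rw [phi_mk, ← hq]
  congr 1
  rw [← hw0]
  exact Fin.cons_self_tail w

lemma hnorm_cons (w : Fin 10 → ZMod 3) :
    hammingNorm (Fin.cons (0 : ZMod 3) w : Fin 11 → ZMod 3) = hammingNorm w := by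
  simp only [hammingNorm]
  rw [Finset.card_filter, Finset.card_filter, Fin.sum_univ_succ]
  simp

lemma cosetAdj_iff {n : ℕ} (C : Submodule (ZMod 3) (Fin n → ZMod 3))
    (X Y : (Fin n → ZMod 3) ⧸ C) :
    (∃ x y : Fin n → ZMod 3,
      (Submodule.Quotient.mk x : (Fin n → ZMod 3) ⧸ C) = X ∧
      (Submodule.Quotient.mk y : (Fin n → ZMod 3) ⧸ C) = Y ∧
      hammingDist x y = 1)
    ↔ ∃ w : Fin n → ZMod 3, hammingNorm w = 1 ∧
      (Submodule.Quotient.mk w : (Fin n → ZMod 3) ⧸ C) = Y - X := by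
  constructor
  · rintro ⟨x, y, rfl, rfl, hd⟩
    refine ⟨y - x, by rwa [← neg_add_eq_sub, ← hammingDist_eq_hammingNorm], ?_⟩
    rw [Submodule.Quotient.mk_sub]
  · rintro ⟨w, h1, hq⟩
    obtain ⟨x, rfl⟩ := Submodule.Quotient.mk_surjective _ X
    refine ⟨x, x + w, rfl, ?_, ?_⟩
    · rw [Submodule.Quotient.mk_add, hq]; abel
    · rw [hammingDist_eq_hammingNorm]; simpa

lemma lambda_rel_iff (X Y : (Fin 10 → ZMod 3) ⧸ Shortened) :
    (∃ v : Fin 11 → ZMod 3, hammingNorm v = 1 ∧ v 0 = 0 ∧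
      (Submodule.Quotient.mk v : (Fin 11 → ZMod 3) ⧸ Golay) = phi Y - phi X)
    ↔ ∃ w : Fin 10 → ZMod 3, hammingNorm w = 1 ∧
      (Submodule.Quotient.mk w : (Fin 10 → ZMod 3) ⧸ Shortened) = Y - X := by
  constructor
  · rintro ⟨v, h1, h0, hq⟩
    have hv : (Fin.cons 0 (Fin.tail v) : Fin 11 → ZMod 3) = v := by
      rw [← h0]; exact Fin.cons_self_tail v
    refine ⟨Fin.tail v, ?_, ?_⟩
    · rw [← hnorm_cons, hv]; exact h1
    · apply phi_inj
      rw [map_sub, phi_mk, hv, hq]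
  · rintro ⟨w, h1, hq⟩
    refine ⟨Fin.cons 0 w, by rw [hnorm_cons]; exact h1, Fin.cons_zero _ _, ?_⟩
    rw [← phi_mk, hq, map_sub]

noncomputable def eEquiv : ((Fin 10 → ZMod 3) ⧸ Shortened) ≃ ((Fin 11 → ZMod 3) ⧸ Golay) :=
  Equiv.ofBijective phi ⟨phi_inj, phi_surj⟩

theorem stmt14 : Nonempty (LambdaPrime ≃g CosetGraph Shortened) := by
  refine ⟨SimpleGraph.Iso.symm ⟨eEquiv, ?_⟩⟩
  intro X Y
  show LambdaPrime.Adj (phi X) (phi Y) ↔ (CosetGraph Shortened).Adj X Y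
  simp only [LambdaPrime, CosetGraph, SimpleGraph.fromRel_adj]
  rw [lambda_rel_iff X Y, lambda_rel_iff Y X, ← cosetAdj_iff Shortened X Y,
    ← cosetAdj_iff Shortened Y X, ne_eq, phi_inj.eq_iff, ← ne_eq]
end
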